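/- Let n, d be positive integers and let w^1,…,w^d ∈ ℕ^{n×n} be nonnegative integer weight matrices. For a vector y ∈ ℕ^d, define the multivariate polynomial g_y over ℤ in the n² variables a_{i,j} (1 ≤ i,j ≤ n) by g_y(a) := Σ { sign(σ) · Π_{i=1}^n a_{i,σ(i)} : σ a permutation of {1,…,n} with w·x_σ = y }. If there exists at least one permutation σ with w·x_σ = y, then g_y is a nonzero polynomial of total degree n. -/

import Mathlib

/-- Projection of the permutation matrix of σ under the weights:
(w·x_σ)_k = Σ_i wᵏ_{i,σ(i)}. -/
def projPerm {n d : ℕ} (w : Fin d → Matrix (Fin n) (Fin n) ℕ)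
    (σ : Equiv.Perm (Fin n)) : Fin d → ℕ :=
  fun k => ∑ i, w k i (σ i)

/-- The polynomial g_y(a) = Σ { sign(σ) Π_i a_{i,σ(i)} : w·x_σ = y }. -/
noncomputable def gPoly {n d : ℕ} (w : Fin d → Matrix (Fin n) (Fin n) ℕ)
    (y : Fin d → ℕ) : MvPolynomial (Fin n × Fin n) ℤ :=
  ∑ σ ∈ Finset.univ.filter (fun σ : Equiv.Perm (Fin n) => projPerm w σ = y),
    (Equiv.Perm.sign σ : ℤ) • ∏ i, MvPolynomial.X (i, σ i)

/-- The exponent Finsupp of the monomial of σ. -/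
noncomputable def msupp {n : ℕ} (σ : Equiv.Perm (Fin n)) : (Fin n × Fin n) →₀ ℕ :=
  ∑ i, Finsupp.single (i, σ i) 1

lemma prod_X_eq_monomial {n : ℕ} (σ : Equiv.Perm (Fin n)) :
    (∏ i, MvPolynomial.X (i, σ i) : MvPolynomial (Fin n × Fin n) ℤ)
      = MvPolynomial.monomial (msupp σ) 1 := by
  rw [msupp, MvPolynomial.monomial_sum_one]
  rfl

lemma msupp_apply {n : ℕ} (σ : Equiv.Perm (Fin n)) (p : Fin n × Fin n) :
    msupp σ p = if σ p.1 = p.2 then 1 else 0 := by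
  rw [msupp]
  rw [Finset.sum_apply']
  rcases eq_or_ne (σ p.1) p.2 with h | h
  · rw [if_pos h]
    rw [Finset.sum_eq_single p.1]
    · rw [h]
      simp
    · intro b _ hb
      rw [Finsupp.single_apply, if_neg]
      rintro rfl; exact hb rfl
    · simp
  · rw [if_neg h]
    apply Finset.sum_eq_zero
    intro b _
    rw [Finsupp.single_apply, if_neg]
    rintro rfl; exact h rfl

lemma msupp_injective {n : ℕ} : Function.Injective (msupp (n := n)) := by
  intro σ τ hst
  apply Equiv.ext
  intro i
  have := congrArg (fun f => f (i, σ i)) hst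
  rw [msupp_apply, msupp_apply] at this
  by_contra hne
  rw [if_pos rfl, if_neg (fun he => hne he.symm)] at this
  exact one_ne_zero this

lemma msupp_sum {n : ℕ} (σ : Equiv.Perm (Fin n)) :
    ((msupp σ).sum fun _ e => e) = n := by
  classical
  rw [msupp, ← Finsupp.sum_finsetSum_index (fun _ => rfl) (fun _ _ _ => rfl)]
  simp [Finsupp.sum_single_index]

theorem gPoly_ne_zero_and_degree (n d : ℕ) (hn : 0 < n) (hd : 0 < d)
    (w : Fin d → Matrix (Fin n) (Fin n) ℕ) (y : Fin d → ℕ)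
    (h : ∃ σ : Equiv.Perm (Fin n), projPerm w σ = y) :
    gPoly w y ≠ 0 ∧ (gPoly w y).totalDegree = n := by
  classical
  obtain ⟨σ₀, hσ₀⟩ := h
  have hcoeff : (gPoly w y).coeff (msupp σ₀) = (Equiv.Perm.sign σ₀ : ℤ) := by
    rw [gPoly]
    rw [MvPolynomial.coeff_sum]
    rw [Finset.sum_eq_single σ₀]
    · rw [MvPolynomial.coeff_smul, prod_X_eq_monomial, MvPolynomial.coeff_monomial,
        if_pos rfl]
      simp
    · intro τ _ hτ
      rw [MvPolynomial.coeff_smul, prod_X_eq_monomial, MvPolynomial.coeff_monomial,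
        if_neg (fun he => hτ (msupp_injective he))]
      simp
    · intro hmem
      exact absurd (Finset.mem_filter.mpr ⟨Finset.mem_univ σ₀, hσ₀⟩) hmem
  have hcne : (gPoly w y).coeff (msupp σ₀) ≠ 0 := by
    rw [hcoeff]
    rcases Int.units_eq_one_or (Equiv.Perm.sign σ₀) with h1 | h1 <;> simp [h1]
  constructor
  · intro h0
    rw [h0] at hcne
    simp at hcne
  · refine le_antisymm ?_ ?_
    · rw [gPoly]
      refine (MvPolynomial.totalDegree_finset_sum _ _).trans (Finset.sup_le ?_)
      intro τ _
      refine (MvPolynomial.totalDegree_smul_le _ _).trans ?_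
      rw [prod_X_eq_monomial]
      refine (MvPolynomial.totalDegree_monomial_le _ _).trans ?_
      exact le_of_eq (msupp_sum τ)
    · have := MvPolynomial.le_totalDegree (p := gPoly w y) (s := msupp σ₀)
        (MvPolynomial.mem_support_iff.mpr hcne)
      rwa [msupp_sum] at this
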